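/- Let s ∈ (2,3] and p_{00}, p_{11} ∈ (0,1). Then for all (τ_0,τ_1), (ρ_0,ρ_1) ∈ M², the components T_0, T_1 of T satisfy ζ_s(T_0(τ_0,τ_1), T_0(ρ_0,ρ_1)) ≤ p_{00}^{s/2} ζ_s(τ_0,ρ_0) + (1 − p_{00})^{s/2} ζ_s(τ_1,ρ_1) and ζ_s(T_1(τ_0,τ_1), T_1(ρ_0,ρ_1)) ≤ (1 − p_{11})^{s/2} ζ_s(τ_0,ρ_0) + p_{11}^{s/2} ζ_s(τ_1,ρ_1). -/

import Mathlib

open MeasureTheory ProbabilityTheory Real Filter Topology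

noncomputable section

/-- The class `F_s` of test functions for the Zolotarev metric `ζ_s`, `2 < s ≤ 3`:
twice continuously differentiable functions whose second derivative is Hölder
continuous of order `s - 2` with constant `1`. -/
def zolotarevF (s : ℝ) : Set (ℝ → ℝ) :=
  {f | ContDiff ℝ 2 f ∧
    ∀ x y : ℝ, |iteratedDeriv 2 f x - iteratedDeriv 2 f y| ≤ |x - y| ^ (s - 2)}

/-- The Zolotarev distance `ζ_s(τ, ρ) = sup_{f ∈ F_s} |∫ f dτ - ∫ f dρ|`. -/
def zolotarevDist (s : ℝ) (τ ρ : Measure ℝ) : ℝ :=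
  sSup {r : ℝ | ∃ f ∈ zolotarevF s, r = |(∫ x, f x ∂τ) - ∫ x, f x ∂ρ|}

/-- Membership in `M_s(0,1)`: Borel probability measures on `ℝ` with mean `0`,
variance `1` and finite absolute moment of order `s`. -/
def MemMs (s : ℝ) (τ : Measure ℝ) : Prop :=
  IsProbabilityMeasure τ ∧ (∫ x, x ∂τ) = 0 ∧ (∫ x, x ^ 2 ∂τ) = 1 ∧
    Integrable (fun x => |x| ^ s) τ

/-- The map `T` on pairs of probability measures:
`T(τ_0, τ_1) = (L(√p_{00} W^0 + √(1-p_{00}) W^1), L(√(1-p_{11}) W^0 + √p_{11} W^1))`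
with `W^0 ∼ τ_0`, `W^1 ∼ τ_1` independent. -/
def Tmap (p00 p11 : ℝ) (τ : Measure ℝ × Measure ℝ) : Measure ℝ × Measure ℝ :=
  ((τ.1.prod τ.2).map fun z => Real.sqrt p00 * z.1 + Real.sqrt (1 - p00) * z.2,
   (τ.1.prod τ.2).map fun z => Real.sqrt (1 - p11) * z.1 + Real.sqrt p11 * z.2)

/-- The metric `ζ_s^∨` on pairs. -/
def zolotarevDistMax (s : ℝ) (τ ρ : Measure ℝ × Measure ℝ) : ℝ :=
  max (zolotarevDist s τ.1 ρ.1) (zolotarevDist s τ.2 ρ.2)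

lemma zero_mem_zF {s : ℝ} : (fun _ : ℝ => (0:ℝ)) ∈ zolotarevF s := by
  refine ⟨contDiff_const, fun x y => ?_⟩
  have : iteratedDeriv 2 (fun _ : ℝ => (0:ℝ)) = fun _ => 0 := by
    funext z
    rw [iteratedDeriv_succ, iteratedDeriv_succ, iteratedDeriv_zero]
    simp
  rw [this]
  simp [Real.rpow_nonneg (abs_nonneg _)]

lemma comp_affine_mem_zF {s : ℝ} (hs : s ∈ Set.Ioc (2:ℝ) 3) {f : ℝ → ℝ}
    (hf : f ∈ zolotarevF s) {a : ℝ} (ha : 0 < a) (c : ℝ) :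
    (fun x => a ^ (-s) * f (a * x + c)) ∈ zolotarevF s := by
  have haff : ContDiff ℝ 2 fun x : ℝ => a * x + c :=
    ((contDiff_const.mul contDiff_id).add contDiff_const)
  have hcomp : ContDiff ℝ 2 fun x => f (a * x + c) := hf.1.comp haff
  have hcd : ContDiff ℝ 2 fun x => a ^ (-s) * f (a * x + c) := contDiff_const.mul hcomp
  refine ⟨hcd, fun x y => ?_⟩
  -- compute iterated derivative
  have hkey : ∀ z : ℝ, iteratedDeriv 2 (fun x => a ^ (-s) * f (a * x + c)) z
      = a ^ (-s) * (a ^ (2:ℕ) * iteratedDeriv 2 f (a * z + c)) := by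
    intro z
    have h1 : iteratedDeriv 2 (fun x => a ^ (-s) * f (a * x + c)) z
        = a ^ (-s) * iteratedDeriv 2 (fun x => f (a * x + c)) z := by
      rw [← iteratedDerivWithin_univ, ← iteratedDerivWithin_univ]
      exact iteratedDerivWithin_const_mul (Set.mem_univ z) uniqueDiffOn_univ _ hcomp.contDiffWithinAt
    have h2 : iteratedDeriv 2 (fun x => f (a * x + c)) z
        = a ^ (2:ℕ) * iteratedDeriv 2 (fun y => f (y + c)) (a * z) := by
      have := iteratedDeriv_comp_const_mul (n := 2) (f := fun y => f (y + c))
        (hf.1.comp ((contDiff_id).add contDiff_const)) a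
      exact congrFun this z
    have h3 : iteratedDeriv 2 (fun y => f (y + c)) = fun y => iteratedDeriv 2 f (y + c) :=
      iteratedDeriv_comp_add_const 2 f c
    rw [h1, h2, h3]
  rw [hkey x, hkey y]
  have habs : |a ^ (-s) * (a ^ (2:ℕ) * iteratedDeriv 2 f (a * x + c))
      - a ^ (-s) * (a ^ (2:ℕ) * iteratedDeriv 2 f (a * y + c))|
      = a ^ (-s) * a ^ (2:ℕ) * |iteratedDeriv 2 f (a * x + c) - iteratedDeriv 2 f (a * y + c)| := by
    rw [← mul_sub, ← mul_sub, ← mul_assoc, abs_mul]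
    congr 1
    rw [abs_of_pos]
    positivity
  rw [habs]
  have hH := hf.2 (a * x + c) (a * y + c)
  have h4 : |a * x + c - (a * y + c)| = a * |x - y| := by
    rw [show a * x + c - (a * y + c) = a * (x - y) by ring, abs_mul, abs_of_pos ha]
  rw [h4] at hH
  have h5 : (a * |x - y|) ^ (s - 2) = a ^ (s - 2) * |x - y| ^ (s - 2) :=
    Real.mul_rpow ha.le (abs_nonneg _)
  calc a ^ (-s) * a ^ (2:ℕ) * |iteratedDeriv 2 f (a * x + c) - iteratedDeriv 2 f (a * y + c)|
      ≤ a ^ (-s) * a ^ (2:ℕ) * (a ^ (s - 2) * |x - y| ^ (s - 2)) := by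
        rw [h5] at hH
        have : (0:ℝ) ≤ a ^ (-s) * a ^ (2:ℕ) := by positivity
        exact mul_le_mul_of_nonneg_left hH this
    _ = (a ^ (-s) * a ^ (2:ℕ) * a ^ (s - 2)) * |x - y| ^ (s - 2) := by ring
    _ = 1 * |x - y| ^ (s - 2) := by
        congr 1
        rw [← Real.rpow_natCast a 2, ← Real.rpow_add ha, ← Real.rpow_add ha]
        norm_num
    _ = |x - y| ^ (s - 2) := one_mul _


lemma abs_le_of_uIoc {x t : ℝ} (ht : t ∈ Set.uIoc 0 x) : |t| ≤ |x| := by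
  rcases ht with ⟨h1, h2⟩
  rcases abs_cases x with ⟨hx, _⟩ | ⟨hx, _⟩ <;> rcases abs_cases t with ⟨h, _⟩ | ⟨h, _⟩ <;>
    simp only [min_def, max_def] at h1 h2 <;> split_ifs at h1 h2 <;> linarith

lemma taylor_bound {s : ℝ} (hs : s ∈ Set.Ioc (2:ℝ) 3) {f : ℝ → ℝ} (hf : f ∈ zolotarevF s)
    (x : ℝ) :
    |f x - (f 0 + deriv f 0 * x + iteratedDeriv 2 f 0 * x ^ 2 / 2)| ≤ |x| ^ s := by
  obtain ⟨hcd, hH⟩ := hf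
  set f2 : ℝ → ℝ := iteratedDeriv 2 f with hf2
  have hdf : Differentiable ℝ f := hcd.differentiable (by norm_num)
  have hdf1 : Differentiable ℝ (deriv f) := by
    have := hcd.differentiable_iteratedDeriv 1 (by norm_num)
    rwa [iteratedDeriv_one] at this
  have hf2eq : f2 = deriv (deriv f) := by
    rw [hf2, iteratedDeriv_succ, iteratedDeriv_one]
  have hc2 : Continuous f2 := hcd.continuous_iteratedDeriv 2 (le_refl _)
  -- Step 1 : bound on deriv difference
  have step1 : ∀ t : ℝ, |deriv f t - deriv f 0 - f2 0 * t| ≤ |t| ^ (s - 1) := by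
    intro t
    have hftc : ∫ u in (0:ℝ)..t, f2 u = deriv f t - deriv f 0 := by
      refine intervalIntegral.integral_eq_sub_of_hasDerivAt (fun u _ => ?_)
        (hc2.intervalIntegrable _ _)
      rw [hf2eq]; exact (hdf1 u).hasDerivAt
    have hconst : ∫ u in (0:ℝ)..t, f2 0 = t * f2 0 := by
      simp [intervalIntegral.integral_const, smul_eq_mul]
    have heq : deriv f t - deriv f 0 - f2 0 * t = ∫ u in (0:ℝ)..t, (f2 u - f2 0) := by
      rw [intervalIntegral.integral_sub (hc2.intervalIntegrable _ _)
        (intervalIntegrable_const), hftc, hconst]; ring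
    rw [heq]
    have hb : ∀ u ∈ Set.uIoc (0:ℝ) t, ‖f2 u - f2 0‖ ≤ |t| ^ (s - 2) := by
      intro u hu
      have h1 : |f2 u - f2 0| ≤ |u| ^ (s - 2) := by simpa using hH u 0
      refine h1.trans (Real.rpow_le_rpow (abs_nonneg _) (abs_le_of_uIoc hu) (by linarith [hs.1]))
    have := intervalIntegral.norm_integral_le_of_norm_le_const hb
    simp only [sub_zero] at this
    calc |∫ u in (0:ℝ)..t, (f2 u - f2 0)| ≤ |t| ^ (s - 2) * |t| := this
      _ = |t| ^ (s - 1) := by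
          rw [show s - 1 = s - 2 + 1 by ring,
            Real.rpow_add' (abs_nonneg _) (by intro h; linarith [hs.1]), Real.rpow_one]
  -- Step 2
  set G : ℝ → ℝ := fun y => f y - (f 0 + deriv f 0 * y + f2 0 * y ^ 2 / 2) with hG
  have hG' : ∀ t : ℝ, HasDerivAt G (deriv f t - deriv f 0 - f2 0 * t) t := by
    intro t
    have h1 : HasDerivAt (fun y : ℝ => f 0 + deriv f 0 * y + f2 0 * y ^ 2 / 2)
        (deriv f 0 + f2 0 * t) t := by
      have ha : HasDerivAt (fun y : ℝ => deriv f 0 * y) (deriv f 0) t := by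
        simpa using (hasDerivAt_id t).const_mul (deriv f 0)
      have hb : HasDerivAt (fun y : ℝ => f2 0 * y ^ 2 / 2) (f2 0 * t) t := by
        have := ((hasDerivAt_pow 2 t).const_mul (f2 0)).div_const 2
        simpa using this.congr_deriv (by ring)
      exact (((hasDerivAt_const t (f 0)).add ha).add hb).congr_deriv (by ring)
    exact ((hdf t).hasDerivAt.sub h1).congr_deriv (by ring)
  have hGv : G x = ∫ t in (0:ℝ)..x, (deriv f t - deriv f 0 - f2 0 * t) := by
    have := intervalIntegral.integral_eq_sub_of_hasDerivAt (f := G)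
      (f' := fun t => deriv f t - deriv f 0 - f2 0 * t) (a := 0) (b := x)
      (fun t _ => hG' t)
      (((hdf1.continuous.sub continuous_const).sub
        (continuous_const.mul continuous_id)).intervalIntegrable _ _)
    rw [this]
    simp [hG]
  have hb2 : ∀ t ∈ Set.uIoc (0:ℝ) x, ‖deriv f t - deriv f 0 - f2 0 * t‖ ≤ |x| ^ (s - 1) := by
    intro t ht
    exact (step1 t).trans (Real.rpow_le_rpow (abs_nonneg _) (abs_le_of_uIoc ht)
      (by linarith [hs.1]))
  have := intervalIntegral.norm_integral_le_of_norm_le_const hb2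
  simp only [sub_zero] at this
  rw [show f x - (f 0 + deriv f 0 * x + f2 0 * x ^ 2 / 2) = G x from rfl, hGv]
  calc |∫ t in (0:ℝ)..x, (deriv f t - deriv f 0 - f2 0 * t)| ≤ |x| ^ (s - 1) * |x| := this
    _ = |x| ^ s := by
        rw [show s = s - 1 + 1 by ring, Real.rpow_add' (abs_nonneg _)
          (by intro h; simp at h; linarith [hs.1]), Real.rpow_one]
        ring_nf


lemma MemMs.integrable_sq {s : ℝ} {μ : Measure ℝ} (hμ : MemMs s μ) :
    Integrable (fun x => x ^ 2) μ := by
  by_contra h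
  have := hμ.2.2.1
  rw [integral_undef h] at this
  norm_num at this

lemma MemMs.integrable_abs {s : ℝ} {μ : Measure ℝ} (hμ : MemMs s μ) :
    Integrable (fun x => |x|) μ := by
  haveI := hμ.1
  refine Integrable.mono' ((integrable_const (1:ℝ)).add hμ.integrable_sq)
    (continuous_abs.aestronglyMeasurable) (Filter.Eventually.of_forall fun x => ?_)
  rw [Real.norm_eq_abs, abs_abs]
  simp only [Pi.add_apply]
  nlinarith [sq_nonneg (|x| - 1), sq_abs x]

lemma MemMs.integrable_id {s : ℝ} {μ : Measure ℝ} (hμ : MemMs s μ) :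
    Integrable (fun x : ℝ => x) μ := by
  refine hμ.integrable_abs.mono' measurable_id.aestronglyMeasurable
    (Filter.Eventually.of_forall fun x => le_of_eq (Real.norm_eq_abs x))

lemma integrable_of_mem_zF {s : ℝ} (hs : s ∈ Set.Ioc (2:ℝ) 3) {f : ℝ → ℝ}
    (hf : f ∈ zolotarevF s) {μ : Measure ℝ} (hμ : MemMs s μ) : Integrable f μ := by
  haveI := hμ.1
  have hbd : Integrable (fun x : ℝ =>
      |x| ^ s + (|f 0| + |deriv f 0| * |x| + |iteratedDeriv 2 f 0| * x ^ 2 / 2)) μ := by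
    refine hμ.2.2.2.add (((integrable_const _).add
      (hμ.integrable_abs.const_mul _)).add ?_)
    exact (hμ.integrable_sq.const_mul _).div_const _
  refine hbd.mono' hf.1.continuous.aestronglyMeasurable
    (Filter.Eventually.of_forall fun x => ?_)
  have h1 := taylor_bound hs hf x
  have h2 : |f x| ≤ |f x - (f 0 + deriv f 0 * x + iteratedDeriv 2 f 0 * x ^ 2 / 2)|
      + |f 0 + deriv f 0 * x + iteratedDeriv 2 f 0 * x ^ 2 / 2| := by
    calc |f x| = |(f x - (f 0 + deriv f 0 * x + iteratedDeriv 2 f 0 * x ^ 2 / 2))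
        + (f 0 + deriv f 0 * x + iteratedDeriv 2 f 0 * x ^ 2 / 2)| := by ring_nf
      _ ≤ _ := abs_add_le _ _
  rw [Real.norm_eq_abs]
  have h3 : |f 0 + deriv f 0 * x + iteratedDeriv 2 f 0 * x ^ 2 / 2|
      ≤ |f 0| + |deriv f 0| * |x| + |iteratedDeriv 2 f 0| * x ^ 2 / 2 := by
    calc |f 0 + deriv f 0 * x + iteratedDeriv 2 f 0 * x ^ 2 / 2|
        ≤ |f 0 + deriv f 0 * x| + |iteratedDeriv 2 f 0 * x ^ 2 / 2| := abs_add_le _ _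
      _ ≤ (|f 0| + |deriv f 0 * x|) + |iteratedDeriv 2 f 0 * x ^ 2 / 2| := by
          gcongr; exact abs_add_le _ _
      _ = |f 0| + |deriv f 0| * |x| + |iteratedDeriv 2 f 0| * x ^ 2 / 2 := by
          rw [abs_mul, abs_div, abs_mul, abs_pow, sq_abs]
          norm_num
  linarith

lemma dual_bound {s : ℝ} (hs : s ∈ Set.Ioc (2:ℝ) 3) {f : ℝ → ℝ}
    (hf : f ∈ zolotarevF s) {μ ν : Measure ℝ} (hμ : MemMs s μ) (hν : MemMs s ν) :
    |(∫ x, f x ∂μ) - ∫ x, f x ∂ν| ≤ (∫ x, |x| ^ s ∂μ) + ∫ x, |x| ^ s ∂ν := by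
  haveI := hμ.1; haveI := hν.1
  set P : ℝ → ℝ := fun x => f 0 + deriv f 0 * x + iteratedDeriv 2 f 0 * x ^ 2 / 2 with hP
  have hPint : ∀ (κ : Measure ℝ), MemMs s κ → Integrable P κ := by
    intro κ hκ
    haveI := hκ.1
    exact ((integrable_const _).add (hκ.integrable_id.const_mul _)).add
      ((hκ.integrable_sq.const_mul _).div_const _)
  have hPval : ∀ (κ : Measure ℝ), MemMs s κ →
      (∫ x, P x ∂κ) = f 0 + iteratedDeriv 2 f 0 / 2 := by
    intro κ hκ
    haveI := hκ.1
    simp only [hP]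
    have hA : Integrable (fun x : ℝ => f 0 + deriv f 0 * x) κ :=
      (integrable_const _).add (hκ.integrable_id.const_mul _)
    have hB : Integrable (fun x : ℝ => iteratedDeriv 2 f 0 * x ^ 2 / 2) κ :=
      (hκ.integrable_sq.const_mul _).div_const _
    have hC : Integrable (fun _ : ℝ => f 0) κ := integrable_const _
    have hD : Integrable (fun x : ℝ => deriv f 0 * x) κ := hκ.integrable_id.const_mul _
    rw [integral_add hA hB, integral_add hC hD]
    simp only [integral_const, measure_univ, probReal_univ, ENNReal.toReal_one, one_smul]
    rw [integral_const_mul, integral_div, integral_const_mul, hκ.2.1, hκ.2.2.1]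
    ring
  have hfμ := integrable_of_mem_zF hs hf hμ
  have hfν := integrable_of_mem_zF hs hf hν
  have hsplit : (∫ x, f x ∂μ) - ∫ x, f x ∂ν
      = (∫ x, (f x - P x) ∂μ) - ∫ x, (f x - P x) ∂ν := by
    rw [integral_sub hfμ (hPint μ hμ), integral_sub hfν (hPint ν hν),
      hPval μ hμ, hPval ν hν]
    ring
  rw [hsplit]
  have hR : ∀ (κ : Measure ℝ), MemMs s κ →
      |∫ x, (f x - P x) ∂κ| ≤ ∫ x, |x| ^ s ∂κ := by
    intro κ hκ
    calc |∫ x, (f x - P x) ∂κ| ≤ ∫ x, |f x - P x| ∂κ := by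
          simpa using norm_integral_le_integral_norm (μ := κ) (f := fun x => f x - P x)
      _ ≤ ∫ x, |x| ^ s ∂κ := by
          refine integral_mono ((integrable_of_mem_zF hs hf hκ).sub (hPint κ hκ)).abs
            hκ.2.2.2 fun x => taylor_bound hs hf x
  calc |(∫ x, (f x - P x) ∂μ) - ∫ x, (f x - P x) ∂ν|
      ≤ |∫ x, (f x - P x) ∂μ| + |∫ x, (f x - P x) ∂ν| := abs_sub _ _
    _ ≤ _ := add_le_add (hR μ hμ) (hR ν hν)

lemma bddAbove_zset {s : ℝ} (hs : s ∈ Set.Ioc (2:ℝ) 3) {μ ν : Measure ℝ}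
    (hμ : MemMs s μ) (hν : MemMs s ν) :
    BddAbove {r : ℝ | ∃ f ∈ zolotarevF s, r = |(∫ x, f x ∂μ) - ∫ x, f x ∂ν|} := by
  refine ⟨(∫ x, |x| ^ s ∂μ) + ∫ x, |x| ^ s ∂ν, fun r hr => ?_⟩
  obtain ⟨f, hf, rfl⟩ := hr
  exact dual_bound hs hf hμ hν


/-- abs growth bound -/
lemma growth_bound {s : ℝ} (hs : s ∈ Set.Ioc (2:ℝ) 3) {f : ℝ → ℝ} (hf : f ∈ zolotarevF s)
    (t : ℝ) :
    |f t| ≤ (|f 0| + |deriv f 0| + |iteratedDeriv 2 f 0| / 2 + 1) * (1 + |t| ^ s) := by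
  have h1 := taylor_bound hs hf t
  have habs : |t| ≤ 1 + |t| ^ s := by
    rcases le_or_gt |t| 1 with h | h
    · have : (0:ℝ) ≤ |t| ^ s := Real.rpow_nonneg (abs_nonneg _) _
      linarith
    · have h2 : |t| ≤ |t| ^ s := by
        calc |t| = |t| ^ (1:ℝ) := (Real.rpow_one _).symm
          _ ≤ |t| ^ s := Real.rpow_le_rpow_of_exponent_le h.le (by linarith [hs.1])
      linarith
  have hsq : t ^ 2 ≤ 1 + |t| ^ s := by
    have ht2 : t ^ 2 = |t| ^ ((2:ℕ):ℝ) := by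
      rw [Real.rpow_natCast, sq_abs]
    rcases le_or_gt |t| 1 with h | h
    · have h2 : t ^ 2 ≤ 1 := by nlinarith [abs_nonneg t, sq_abs t]
      have : (0:ℝ) ≤ |t| ^ s := Real.rpow_nonneg (abs_nonneg _) _
      linarith
    · rw [ht2]
      have := Real.rpow_le_rpow_of_exponent_le h.le (show ((2:ℕ):ℝ) ≤ s by
        push_cast; linarith [hs.1])
      linarith
  have h2 : |f t| ≤ |f 0| + |deriv f 0| * |t| + |iteratedDeriv 2 f 0| * t ^ 2 / 2
      + |t| ^ s := by
    have h3 : |f t| ≤ |f t - (f 0 + deriv f 0 * t + iteratedDeriv 2 f 0 * t ^ 2 / 2)|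
        + |f 0 + deriv f 0 * t + iteratedDeriv 2 f 0 * t ^ 2 / 2| := by
      calc |f t| = |(f t - (f 0 + deriv f 0 * t + iteratedDeriv 2 f 0 * t ^ 2 / 2))
          + (f 0 + deriv f 0 * t + iteratedDeriv 2 f 0 * t ^ 2 / 2)| := by ring_nf
        _ ≤ _ := abs_add_le _ _
    have h4 : |f 0 + deriv f 0 * t + iteratedDeriv 2 f 0 * t ^ 2 / 2|
        ≤ |f 0| + |deriv f 0| * |t| + |iteratedDeriv 2 f 0| * t ^ 2 / 2 := by
      calc _ ≤ |f 0 + deriv f 0 * t| + |iteratedDeriv 2 f 0 * t ^ 2 / 2| := abs_add_le _ _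
        _ ≤ (|f 0| + |deriv f 0 * t|) + |iteratedDeriv 2 f 0 * t ^ 2 / 2| := by
            gcongr; exact abs_add_le _ _
        _ = |f 0| + |deriv f 0| * |t| + |iteratedDeriv 2 f 0| * t ^ 2 / 2 := by
            rw [abs_mul, abs_div, abs_mul, abs_pow, sq_abs]; norm_num
    linarith
  have hnn : (0:ℝ) ≤ |t| ^ s := Real.rpow_nonneg (abs_nonneg _) _
  nlinarith [abs_nonneg (f 0), abs_nonneg (deriv f 0), abs_nonneg (iteratedDeriv 2 f 0),
    abs_nonneg t]

lemma two_rpow_bound {s x y : ℝ} (hs : 0 ≤ s) (hx : 0 ≤ x) (hy : 0 ≤ y) :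
    (x + y) ^ s ≤ 2 ^ s * (x ^ s + y ^ s) := by
  have h1 : x + y ≤ 2 * max x y := by
    rcases max_cases x y with ⟨h, h'⟩ | ⟨h, h'⟩ <;> rw [h] <;> linarith
  calc (x + y) ^ s ≤ (2 * max x y) ^ s :=
        Real.rpow_le_rpow (by linarith) h1 hs
    _ = 2 ^ s * (max x y) ^ s := Real.mul_rpow (by norm_num) (le_max_iff.mpr (Or.inl hx))
    _ ≤ 2 ^ s * (x ^ s + y ^ s) := by
        gcongr 2 ^ s * ?_
        rcases max_cases x y with ⟨h, _⟩ | ⟨h, _⟩ <;> rw [h] <;>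
          [skip; skip] <;> nlinarith [Real.rpow_nonneg hx s, Real.rpow_nonneg hy s]

lemma integrable_comp_prod {s : ℝ} (hs : s ∈ Set.Ioc (2:ℝ) 3) {f : ℝ → ℝ}
    (hf : f ∈ zolotarevF s) {μ κ : Measure ℝ} (hμ : MemMs s μ) (hκ : MemMs s κ)
    {a b : ℝ} (ha : 0 < a) (hb : 0 < b) :
    Integrable (fun z : ℝ × ℝ => f (a * z.1 + b * z.2)) (μ.prod κ) := by
  haveI := hμ.1; haveI := hκ.1
  set K : ℝ := |f 0| + |deriv f 0| + |iteratedDeriv 2 f 0| / 2 + 1 with hK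
  have hK0 : 0 ≤ K := by positivity
  have hfst : Integrable (fun z : ℝ × ℝ => |z.1| ^ s) (μ.prod κ) := by
    have hmap : (μ.prod κ).map Prod.fst = μ := by
      rw [Measure.map_fst_prod]; simp [measure_univ]
    have h := hμ.2.2.2
    rw [← hmap] at h
    exact h.comp_measurable measurable_fst
  have hsnd : Integrable (fun z : ℝ × ℝ => |z.2| ^ s) (μ.prod κ) := by
    have hmap : (μ.prod κ).map Prod.snd = κ := by
      rw [Measure.map_snd_prod]; simp [measure_univ]
    have h := hκ.2.2.2
    rw [← hmap] at h
    exact h.comp_measurable measurable_snd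
  have hG : Integrable (fun z : ℝ × ℝ =>
      K * (1 + 2 ^ s * (a ^ s * |z.1| ^ s + b ^ s * |z.2| ^ s))) (μ.prod κ) := by
    exact (((integrable_const _).add
      (((hfst.const_mul _).add (hsnd.const_mul _)).const_mul _)).const_mul _)
  refine hG.mono' (hf.1.continuous.comp
    ((continuous_fst.const_smul a).add (continuous_snd.const_smul b))).aestronglyMeasurable
    (Filter.Eventually.of_forall fun z => ?_)
  rw [Real.norm_eq_abs]
  have h1 := growth_bound hs hf (a * z.1 + b * z.2)
  have h2 : |a * z.1 + b * z.2| ^ s ≤ 2 ^ s * (a ^ s * |z.1| ^ s + b ^ s * |z.2| ^ s) := by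
    have h3 : |a * z.1 + b * z.2| ≤ a * |z.1| + b * |z.2| := by
      calc |a * z.1 + b * z.2| ≤ |a * z.1| + |b * z.2| := abs_add_le _ _
        _ = a * |z.1| + b * |z.2| := by rw [abs_mul, abs_mul, abs_of_pos ha, abs_of_pos hb]
    calc |a * z.1 + b * z.2| ^ s ≤ (a * |z.1| + b * |z.2|) ^ s :=
          Real.rpow_le_rpow (abs_nonneg _) h3 (by linarith [hs.1])
      _ ≤ 2 ^ s * ((a * |z.1|) ^ s + (b * |z.2|) ^ s) :=
          two_rpow_bound (by linarith [hs.1]) (by positivity) (by positivity)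
      _ = 2 ^ s * (a ^ s * |z.1| ^ s + b ^ s * |z.2| ^ s) := by
          rw [Real.mul_rpow ha.le (abs_nonneg _), Real.mul_rpow hb.le (abs_nonneg _)]
  calc |f (a * z.1 + b * z.2)| ≤ K * (1 + |a * z.1 + b * z.2| ^ s) := h1
    _ ≤ K * (1 + 2 ^ s * (a ^ s * |z.1| ^ s + b ^ s * |z.2| ^ s)) := by
        apply mul_le_mul_of_nonneg_left _ hK0
        linarith

lemma key_fst {s : ℝ} (hs : s ∈ Set.Ioc (2:ℝ) 3) {μ ν κ : Measure ℝ}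
    (hμ : MemMs s μ) (hν : MemMs s ν) (hκ : MemMs s κ) {a b : ℝ} (ha : 0 < a) (hb : 0 < b)
    {f : ℝ → ℝ} (hf : f ∈ zolotarevF s) :
    |(∫ z : ℝ × ℝ, f (a * z.1 + b * z.2) ∂(μ.prod κ))
      - ∫ z : ℝ × ℝ, f (a * z.1 + b * z.2) ∂(ν.prod κ)|
      ≤ a ^ s * zolotarevDist s μ ν := by
  haveI := hμ.1; haveI := hν.1; haveI := hκ.1
  have hintμ := integrable_comp_prod hs hf hμ hκ ha hb
  have hintν := integrable_comp_prod hs hf hν hκ ha hb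
  -- Fubini with the κ-integral outside
  have hswap : ∀ (ρ : Measure ℝ), MemMs s ρ →
      Integrable (fun z : ℝ × ℝ => f (a * z.1 + b * z.2)) (ρ.prod κ) →
      (∫ z : ℝ × ℝ, f (a * z.1 + b * z.2) ∂(ρ.prod κ))
        = ∫ y, (∫ x, f (a * x + b * y) ∂ρ) ∂κ := by
    intro ρ hρ hint
    haveI := hρ.1
    have h1 := integral_prod (μ := ρ) (ν := κ)
      (fun z : ℝ × ℝ => f (a * z.1 + b * z.2)) hint
    have h2 := integral_integral_swap (μ := ρ) (ν := κ)
      (f := fun x y => f (a * x + b * y)) hint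
    rw [h1]
    exact h2
  rw [hswap μ hμ hintμ, hswap ν hν hintν]
  have hInt1 : Integrable (fun y => ∫ x, f (a * x + b * y) ∂μ) κ := by
    exact hintμ.integral_prod_right
  have hInt2 : Integrable (fun y => ∫ x, f (a * x + b * y) ∂ν) κ := by
    exact hintν.integral_prod_right
  rw [← integral_sub hInt1 hInt2]
  have hbound : ∀ y : ℝ, |(∫ x, f (a * x + b * y) ∂μ) - ∫ x, f (a * x + b * y) ∂ν|
      ≤ a ^ s * zolotarevDist s μ ν := by
    intro y
    have hg : (fun x => a ^ (-s) * f (a * x + b * y)) ∈ zolotarevF s :=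
      comp_affine_mem_zF hs hf ha (b * y)
    have hle : |(∫ x, a ^ (-s) * f (a * x + b * y) ∂μ)
        - ∫ x, a ^ (-s) * f (a * x + b * y) ∂ν| ≤ zolotarevDist s μ ν :=
      le_csSup (bddAbove_zset hs hμ hν) ⟨_, hg, rfl⟩
    rw [integral_const_mul, integral_const_mul, ← mul_sub, abs_mul,
      abs_of_pos (Real.rpow_pos_of_pos ha _)] at hle
    have has : a ^ s * (a ^ (-s) * |(∫ x, f (a * x + b * y) ∂μ)
        - ∫ x, f (a * x + b * y) ∂ν|)
        = |(∫ x, f (a * x + b * y) ∂μ) - ∫ x, f (a * x + b * y) ∂ν| := by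
      rw [← mul_assoc, ← Real.rpow_add ha]
      simp
    calc |(∫ x, f (a * x + b * y) ∂μ) - ∫ x, f (a * x + b * y) ∂ν|
        = a ^ s * (a ^ (-s) * |(∫ x, f (a * x + b * y) ∂μ)
          - ∫ x, f (a * x + b * y) ∂ν|) := has.symm
      _ ≤ a ^ s * zolotarevDist s μ ν := by
          apply mul_le_mul_of_nonneg_left hle (Real.rpow_pos_of_pos ha _).le
  calc |∫ y, ((∫ x, f (a * x + b * y) ∂μ) - ∫ x, f (a * x + b * y) ∂ν) ∂κ|
      ≤ (a ^ s * zolotarevDist s μ ν) * (κ Set.univ).toReal := by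
        rw [← Real.norm_eq_abs]
        refine norm_integral_le_of_norm_le_const (Filter.Eventually.of_forall fun y => ?_)
        rw [Real.norm_eq_abs]
        exact hbound y
    _ = a ^ s * zolotarevDist s μ ν := by simp [measure_univ]

lemma key_snd {s : ℝ} (hs : s ∈ Set.Ioc (2:ℝ) 3) {μ ν κ : Measure ℝ}
    (hμ : MemMs s μ) (hν : MemMs s ν) (hκ : MemMs s κ) {a b : ℝ} (ha : 0 < a) (hb : 0 < b)
    {f : ℝ → ℝ} (hf : f ∈ zolotarevF s) :
    |(∫ z : ℝ × ℝ, f (a * z.1 + b * z.2) ∂(κ.prod μ))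
      - ∫ z : ℝ × ℝ, f (a * z.1 + b * z.2) ∂(κ.prod ν)|
      ≤ b ^ s * zolotarevDist s μ ν := by
  haveI := hμ.1; haveI := hν.1; haveI := hκ.1
  have hrw : ∀ (ρ : Measure ℝ), IsProbabilityMeasure ρ →
      (∫ z : ℝ × ℝ, f (a * z.1 + b * z.2) ∂(κ.prod ρ))
        = ∫ z : ℝ × ℝ, f (b * z.1 + a * z.2) ∂(ρ.prod κ) := by
    intro ρ _
    rw [← integral_prod_swap (fun z : ℝ × ℝ => f (b * z.1 + a * z.2))]
    congr 1
    funext z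
    simp only [Prod.fst_swap, Prod.snd_swap]
    ring_nf
  rw [hrw μ hμ.1, hrw ν hν.1]
  exact key_fst hs hμ hν hκ hb ha hf

lemma zdist_nonneg {s : ℝ} (hs : s ∈ Set.Ioc (2:ℝ) 3) {μ ν : Measure ℝ}
    (hμ : MemMs s μ) (hν : MemMs s ν) : 0 ≤ zolotarevDist s μ ν := by
  have h0 : (0:ℝ) ∈ {r : ℝ | ∃ f ∈ zolotarevF s, r = |(∫ x, f x ∂μ) - ∫ x, f x ∂ν|} :=
    ⟨fun _ => 0, zero_mem_zF, by simp⟩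
  exact le_csSup (bddAbove_zset hs hμ hν) h0

lemma zdist_map_le {s : ℝ} (hs : s ∈ Set.Ioc (2:ℝ) 3) {μ0 μ1 ν0 ν1 : Measure ℝ}
    (h0 : MemMs s μ0) (h1 : MemMs s μ1) (h2 : MemMs s ν0) (h3 : MemMs s ν1)
    {a b : ℝ} (ha : 0 < a) (hb : 0 < b) :
    zolotarevDist s ((μ0.prod μ1).map fun z => a * z.1 + b * z.2)
        ((ν0.prod ν1).map fun z => a * z.1 + b * z.2)
      ≤ a ^ s * zolotarevDist s μ0 ν0 + b ^ s * zolotarevDist s μ1 ν1 := by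
  haveI := h0.1; haveI := h1.1; haveI := h2.1; haveI := h3.1
  have hRHS : (0:ℝ) ≤ a ^ s * zolotarevDist s μ0 ν0 + b ^ s * zolotarevDist s μ1 ν1 := by
    have := zdist_nonneg hs h0 h2
    have := zdist_nonneg hs h1 h3
    have := Real.rpow_nonneg ha.le s
    have := Real.rpow_nonneg hb.le s
    positivity
  refine Real.sSup_le (fun r hr => ?_) hRHS
  obtain ⟨f, hf, rfl⟩ := hr
  have hφ : Measurable fun z : ℝ × ℝ => a * z.1 + b * z.2 :=
    (measurable_fst.const_mul a).add (measurable_snd.const_mul b)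
  have hmap : ∀ (P : Measure ℝ × Measure ℝ), IsProbabilityMeasure P.1 →
      IsProbabilityMeasure P.2 →
      (∫ x, f x ∂((P.1.prod P.2).map fun z => a * z.1 + b * z.2))
        = ∫ z : ℝ × ℝ, f (a * z.1 + b * z.2) ∂(P.1.prod P.2) := by
    intro P _ _
    exact integral_map hφ.aemeasurable hf.1.continuous.aestronglyMeasurable
  rw [hmap (μ0, μ1) h0.1 h1.1, hmap (ν0, ν1) h2.1 h3.1]
  have hkey1 := key_fst hs h0 h2 h1 ha hb hf
  have hkey2 := key_snd hs h1 h3 h2 ha hb hf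
  calc |(∫ z : ℝ × ℝ, f (a * z.1 + b * z.2) ∂((μ0, μ1).1.prod (μ0, μ1).2))
      - ∫ z : ℝ × ℝ, f (a * z.1 + b * z.2) ∂((ν0, ν1).1.prod (ν0, ν1).2)|
      ≤ |(∫ z : ℝ × ℝ, f (a * z.1 + b * z.2) ∂(μ0.prod μ1))
        - ∫ z : ℝ × ℝ, f (a * z.1 + b * z.2) ∂(ν0.prod μ1)|
        + |(∫ z : ℝ × ℝ, f (a * z.1 + b * z.2) ∂(ν0.prod μ1))
        - ∫ z : ℝ × ℝ, f (a * z.1 + b * z.2) ∂(ν0.prod ν1)| := by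
          exact abs_sub_le _ _ _
    _ ≤ a ^ s * zolotarevDist s μ0 ν0 + b ^ s * zolotarevDist s μ1 ν1 :=
          add_le_add hkey1 hkey2

lemma sqrt_rpow_half {p s : ℝ} (hp : 0 < p) : Real.sqrt p ^ s = p ^ (s / 2) := by
  rw [Real.sqrt_eq_rpow, ← Real.rpow_mul hp.le, show 1 / 2 * s = s / 2 by ring]


/-- componentwise contraction estimates for `T`: for `s ∈ (2,3]`
and `p_{00}, p_{11} ∈ (0,1)`, on `M²` one has
`ζ_s(T_0(τ), T_0(ρ)) ≤ p_{00}^{s/2} ζ_s(τ_0,ρ_0) + (1-p_{00})^{s/2} ζ_s(τ_1,ρ_1)` and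
`ζ_s(T_1(τ), T_1(ρ)) ≤ (1-p_{11})^{s/2} ζ_s(τ_0,ρ_0) + p_{11}^{s/2} ζ_s(τ_1,ρ_1)`. -/
theorem Tmap_component_estimates
    (s : ℝ) (hs : s ∈ Set.Ioc (2 : ℝ) 3)
    (p00 p11 : ℝ) (hp00 : p00 ∈ Set.Ioo (0 : ℝ) 1) (hp11 : p11 ∈ Set.Ioo (0 : ℝ) 1) :
    ∀ τ ρ : Measure ℝ × Measure ℝ,
      MemMs s τ.1 → MemMs s τ.2 → MemMs s ρ.1 → MemMs s ρ.2 →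
      zolotarevDist s (Tmap p00 p11 τ).1 (Tmap p00 p11 ρ).1
          ≤ p00 ^ (s / 2) * zolotarevDist s τ.1 ρ.1
            + (1 - p00) ^ (s / 2) * zolotarevDist s τ.2 ρ.2 ∧
      zolotarevDist s (Tmap p00 p11 τ).2 (Tmap p00 p11 ρ).2
          ≤ (1 - p11) ^ (s / 2) * zolotarevDist s τ.1 ρ.1
            + p11 ^ (s / 2) * zolotarevDist s τ.2 ρ.2 := by
  intro τ ρ hτ1 hτ2 hρ1 hρ2
  have hq00 : (0:ℝ) < 1 - p00 := by linarith [hp00.2]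
  have hq11 : (0:ℝ) < 1 - p11 := by linarith [hp11.2]
  constructor
  · have := zdist_map_le hs hτ1 hτ2 hρ1 hρ2
      (Real.sqrt_pos.mpr hp00.1) (Real.sqrt_pos.mpr hq00)
    rwa [sqrt_rpow_half hp00.1, sqrt_rpow_half hq00] at this
  · have := zdist_map_le hs hτ1 hτ2 hρ1 hρ2
      (Real.sqrt_pos.mpr hq11) (Real.sqrt_pos.mpr hp11.1)
    rwa [sqrt_rpow_half hq11, sqrt_rpow_half hp11.1] at this
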